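/- For any number of voters n, committee size k ≤ n, and number of issues m, the worst-case approximation ratio of the k-sortition rule over preference profiles with m issues equals its worst-case approximation ratio over profiles with a single issue. -/

import Mathlib

open Finset BigOperators

noncomputable section

/-- Hamming distance between two preference vectors over `m` binary issues. -/
def hamming {m : ℕ} (x y : Fin m → Bool) : ℕ :=
  (Finset.univ.filter fun j => x j ≠ y j).card

/-- Social cost of outcome `z` on profile `X`: sum of Hamming distances. -/
def SC {n m : ℕ} (X : Fin n → Fin m → Bool) (z : Fin m → Bool) : ℕ :=
  ∑ i, hamming (X i) z

/-- Optimal (minimal) social cost over all outcomes. -/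
def optCost {n m : ℕ} (X : Fin n → Fin m → Bool) : ℕ :=
  Finset.univ.inf' Finset.univ_nonempty fun z : Fin m → Bool => SC X z

/-- Number of voters preferring alternative 1 (`true`) on issue `j`. -/
def trueCount {n m : ℕ} (X : Fin n → Fin m → Bool) (j : Fin m) : ℕ :=
  (Finset.univ.filter fun i => X i j = true).card

/-- Number of voters preferring alternative 0 (`false`) on issue `j`. -/
def falseCount {n m : ℕ} (X : Fin n → Fin m → Bool) (j : Fin m) : ℕ :=
  (Finset.univ.filter fun i => X i j = false).card

/-- Expected social cost of `k`-sortition: a uniformly random committee of size `k`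
decides each issue by simple majority, ties broken uniformly at random. -/
def sortitionCost (k : ℕ) {n m : ℕ} (X : Fin n → Fin m → Bool) : ℝ :=
  (∑ C ∈ Finset.powersetCard k (Finset.univ : Finset (Fin n)), ∑ j : Fin m,
      (if k < 2 * (C.filter fun i => X i j = true).card then (falseCount X j : ℝ)
       else if 2 * (C.filter fun i => X i j = true).card < k then (trueCount X j : ℝ)
       else (n : ℝ) / 2)) / (n.choose k : ℝ)

/-- Ratio of an (expected) cost to the optimal cost, with the convention `0/0 = 1`. -/
def ratio (cost : ℝ) (opt : ℕ) : ℝ := if opt = 0 then 1 else cost / (opt : ℝ)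

/-- Worst-case approximation ratio of `k`-sortition over profiles with `n` voters, `m` issues. -/
def sortitionAR (n m k : ℕ) : ℝ :=
  ⨆ X : Fin n → Fin m → Bool, ratio (sortitionCost k X) (optCost X)

/-- The set of committee members of `C` closest (in Hamming distance) to voter `i`. -/
def closestSet {n m : ℕ} (X : Fin n → Fin m → Bool) (C : Finset (Fin n)) (i : Fin n) :
    Finset (Fin n) :=
  C.filter fun c => ∀ c' ∈ C, hamming (X i) (X c) ≤ hamming (X i) (X c')

/-- Weight of committee member `c`: each voter splits one unit of weight equally among
their closest committee members. -/
def wWeight {n m : ℕ} (X : Fin n → Fin m → Bool) (C : Finset (Fin n)) (c : Fin n) : ℝ :=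
  ∑ i : Fin n, if c ∈ closestSet X C i then 1 / ((closestSet X C i).card : ℝ) else 0

/-- Expected social cost of the decision of committee `C` under weighted majority
(per issue, ties broken uniformly). -/
def wCost {n m : ℕ} (X : Fin n → Fin m → Bool) (C : Finset (Fin n)) : ℝ :=
  ∑ j : Fin m,
    (if (∑ c ∈ C.filter (fun c => X c j = false), wWeight X C c)
          < (∑ c ∈ C.filter (fun c => X c j = true), wWeight X C c)
        then (falseCount X j : ℝ)
     else if (∑ c ∈ C.filter (fun c => X c j = true), wWeight X C c)
          < (∑ c ∈ C.filter (fun c => X c j = false), wWeight X C c)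
        then (trueCount X j : ℝ)
     else (n : ℝ) / 2)

/-- Expected social cost of weighted `k`-sortition: uniformly random committee of size `k`,
weighted majority vote per issue. -/
def wSortitionCost (k : ℕ) {n m : ℕ} (X : Fin n → Fin m → Bool) : ℝ :=
  (∑ C ∈ Finset.powersetCard k (Finset.univ : Finset (Fin n)), wCost X C) / (n.choose k : ℝ)

/-- Worst-case approximation ratio of weighted `k`-sortition. -/
def wSortitionAR (n m k : ℕ) : ℝ :=
  ⨆ X : Fin n → Fin m → Bool, ratio (wSortitionCost k X) (optCost X)


/-- Number of voters disagreeing with `b` on issue `j`. -/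
def Dcnt {n m : ℕ} (X : Fin n → Fin m → Bool) (j : Fin m) (b : Bool) : ℕ :=
  (Finset.univ.filter fun i => X i j ≠ b).card

lemma SC_eq {n m : ℕ} (X : Fin n → Fin m → Bool) (z : Fin m → Bool) :
    SC X z = ∑ j, Dcnt X j (z j) := by
  unfold SC hamming Dcnt
  simp only [Finset.card_filter]
  rw [Finset.sum_comm]

lemma optCost_eq {n m : ℕ} (X : Fin n → Fin m → Bool) :
    optCost X = ∑ j, min (Dcnt X j true) (Dcnt X j false) := by
  unfold optCost
  apply le_antisymm
  · calc Finset.univ.inf' Finset.univ_nonempty (fun z : Fin m → Bool => SC X z)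
        ≤ SC X (fun j => if Dcnt X j true ≤ Dcnt X j false then true else false) :=
          Finset.inf'_le _ (Finset.mem_univ _)
      _ ≤ ∑ j, min (Dcnt X j true) (Dcnt X j false) := by
          rw [SC_eq]
          apply Finset.sum_le_sum
          intro j _
          by_cases h : Dcnt X j true ≤ Dcnt X j false <;> simp [h, min_def] <;> omega
  · apply Finset.le_inf'
    intro z _
    rw [SC_eq]
    apply Finset.sum_le_sum
    intro j _
    cases hz : z j
    · simpa [hz] using min_le_right (Dcnt X j true) (Dcnt X j false)
    · simpa [hz] using min_le_left (Dcnt X j true) (Dcnt X j false)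

/-- Per-issue expected sortition cost. -/
def S1 (k : ℕ) {n m : ℕ} (X : Fin n → Fin m → Bool) (j : Fin m) : ℝ :=
  (∑ C ∈ Finset.powersetCard k (Finset.univ : Finset (Fin n)),
      (if k < 2 * (C.filter fun i => X i j = true).card then (falseCount X j : ℝ)
       else if 2 * (C.filter fun i => X i j = true).card < k then (trueCount X j : ℝ)
       else (n : ℝ) / 2)) / (n.choose k : ℝ)

lemma sortitionCost_eq (k : ℕ) {n m : ℕ} (X : Fin n → Fin m → Bool) :
    sortitionCost k X = ∑ j, S1 k X j := by
  unfold sortitionCost S1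
  rw [Finset.sum_comm, ← Finset.sum_div]

lemma S1_slice (k : ℕ) {n m : ℕ} (X : Fin n → Fin m → Bool) (j : Fin m) :
    S1 k X j = sortitionCost k (fun i (_ : Fin 1) => X i j) := by
  unfold sortitionCost S1 trueCount falseCount
  simp [Fin.sum_univ_one]

lemma optCost_slice {n m : ℕ} (X : Fin n → Fin m → Bool) (j : Fin m) :
    optCost (fun i (_ : Fin 1) => X i j) = min (Dcnt X j true) (Dcnt X j false) := by
  rw [optCost_eq, Fin.sum_univ_one]
  rfl

lemma S1_zero (k : ℕ) (hk : 1 ≤ k) {n m : ℕ} (X : Fin n → Fin m → Bool) (j : Fin m)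
    (h : min (Dcnt X j true) (Dcnt X j false) = 0) : S1 k X j = 0 := by
  unfold S1
  rw [Nat.min_eq_zero_iff] at h
  rcases h with h | h
  · -- every voter votes true on issue j
    rw [Dcnt, Finset.card_eq_zero, Finset.filter_eq_empty_iff] at h
    have hall : ∀ i, X i j = true := by
      intro i
      have := h (Finset.mem_univ i)
      simpa using this
    have hfc : (falseCount X j : ℝ) = 0 := by
      norm_cast
      rw [falseCount, Finset.card_eq_zero, Finset.filter_eq_empty_iff]
      intro i _
      simp [hall i]
    rw [Finset.sum_eq_zero, zero_div]
    intro C hC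
    rw [Finset.mem_powersetCard] at hC
    have hfil : C.filter (fun i => X i j = true) = C :=
      Finset.filter_eq_self.mpr (fun i _ => hall i)
    rw [hfil, hC.2, if_pos (by omega)]
    exact hfc
  · -- every voter votes false on issue j
    rw [Dcnt, Finset.card_eq_zero, Finset.filter_eq_empty_iff] at h
    have hall : ∀ i, X i j = false := by
      intro i
      have := h (Finset.mem_univ i)
      simpa using this
    have htc : (trueCount X j : ℝ) = 0 := by
      norm_cast
      rw [trueCount, Finset.card_eq_zero, Finset.filter_eq_empty_iff]
      intro i _
      simp [hall i]
    rw [Finset.sum_eq_zero, zero_div]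
    intro C hC
    rw [Finset.mem_powersetCard] at hC
    have hfil : C.filter (fun i => X i j = true) = ∅ := by
      rw [Finset.filter_eq_empty_iff]
      intro i _
      simp [hall i]
    rw [hfil]
    simp only [Finset.card_empty, Nat.mul_zero]
    simp only [Nat.not_lt_zero, show 0 < k by omega, ↓reduceIte]
    exact htc

theorem stmt0 (n m k : ℕ) (hn : 1 ≤ n) (hm : 1 ≤ m) (hk : 1 ≤ k) (hkn : k ≤ n) :
    sortitionAR n m k = sortitionAR n 1 k := by
  have hbdd1 : BddAbove (Set.range fun Y : Fin n → Fin 1 → Bool =>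
      ratio (sortitionCost k Y) (optCost Y)) := Set.Finite.bddAbove (Set.finite_range _)
  have hbddm : BddAbove (Set.range fun X : Fin n → Fin m → Bool =>
      ratio (sortitionCost k X) (optCost X)) := Set.Finite.bddAbove (Set.finite_range _)
  have hR1 : (1 : ℝ) ≤ sortitionAR n 1 k := by
    have hopt : optCost (fun (_ : Fin n) (_ : Fin 1) => true) = 0 := by
      have h1 : optCost (fun (_ : Fin n) (_ : Fin 1) => true)
          ≤ SC (fun (_ : Fin n) (_ : Fin 1) => true) (fun _ => true) :=
        Finset.inf'_le _ (Finset.mem_univ _)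
      have h2 : SC (fun (_ : Fin n) (_ : Fin 1) => true) (fun _ => true) = 0 := by
        simp [SC, hamming]
      omega
    calc (1 : ℝ) = ratio (sortitionCost k (fun (_ : Fin n) (_ : Fin 1) => true))
          (optCost (fun (_ : Fin n) (_ : Fin 1) => true)) := by rw [ratio, if_pos hopt]
      _ ≤ sortitionAR n 1 k := le_ciSup hbdd1 _
  apply le_antisymm
  · apply ciSup_le
    intro X
    by_cases hopt : optCost X = 0
    · rw [ratio, if_pos hopt]
      exact hR1
    · rw [ratio, if_neg hopt]
      have hoptpos : (0 : ℝ) < (optCost X : ℝ) := by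
        exact_mod_cast Nat.pos_of_ne_zero hopt
      rw [div_le_iff₀ hoptpos, sortitionCost_eq, optCost_eq, Nat.cast_sum, Finset.mul_sum]
      apply Finset.sum_le_sum
      intro j _
      by_cases hj : min (Dcnt X j true) (Dcnt X j false) = 0
      · rw [S1_zero k hk X j hj, hj]
        simp
      · have hjpos : (0 : ℝ) < ((min (Dcnt X j true) (Dcnt X j false) : ℕ) : ℝ) := by
          exact_mod_cast Nat.pos_of_ne_zero hj
        have hratio : ratio (sortitionCost k (fun i (_ : Fin 1) => X i j))
            (optCost (fun i (_ : Fin 1) => X i j)) ≤ sortitionAR n 1 k := le_ciSup hbdd1 _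
        rw [ratio, optCost_slice, if_neg hj, div_le_iff₀ hjpos, ← S1_slice] at hratio
        exact hratio
  · apply ciSup_le
    intro Y
    set X : Fin n → Fin m → Bool := fun i _ => Y i 0 with hX
    have hslice : ∀ j : Fin m, (fun i (_ : Fin 1) => X i j) = Y := by
      intro j
      funext i j'
      have hj' : j' = 0 := Subsingleton.elim _ _
      rw [hj']
    have hcost : sortitionCost k X = (m : ℝ) * sortitionCost k Y := by
      rw [sortitionCost_eq, Finset.sum_congr rfl (fun j _ => by rw [S1_slice, hslice j])]
      simp [Finset.sum_const, nsmul_eq_mul]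
    have hopt : optCost X = m * optCost Y := by
      rw [optCost_eq,
        Finset.sum_congr rfl (fun j _ => by rw [← optCost_slice, hslice j])]
      simp [Finset.sum_const]
    have hkey : ratio (sortitionCost k Y) (optCost Y)
        = ratio (sortitionCost k X) (optCost X) := by
      unfold ratio
      rw [hcost, hopt]
      by_cases h : optCost Y = 0
      · simp [h]
      · have hm0 : m ≠ 0 := by omega
        rw [if_neg h, if_neg (by simp [h, hm0]), Nat.cast_mul,
          mul_div_mul_left _ _ (by exact_mod_cast hm0 : (m : ℝ) ≠ 0)]
    rw [hkey]
    exact le_ciSup hbddm X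

end
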